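/- For all real x, the second derivative with respect to x of Q(x,-1) = √(1 + √(1+x²)) equals cos((3/2)·arctan x) / (2√2 · (x²+1)^{3/4}). -/

import Mathlib

lemma stmt14_d1 (t : ℝ) : HasDerivAt (fun u : ℝ => Real.sqrt (1 + Real.sqrt (1 + u ^ 2)))
    ((2 * t / (2 * Real.sqrt (1 + t ^ 2))) / (2 * Real.sqrt (1 + Real.sqrt (1 + t ^ 2)))) t := by
  have h0 : (0:ℝ) < 1 + t ^ 2 := by positivity
  have h1 : HasDerivAt (fun u : ℝ => 1 + u ^ 2) (2 * t) t := by
    simpa using (hasDerivAt_pow 2 t).const_add 1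
  have h2 := h1.sqrt h0.ne'
  have h3 : HasDerivAt (fun u : ℝ => 1 + Real.sqrt (1 + u ^ 2))
      (2 * t / (2 * Real.sqrt (1 + t ^ 2))) t := h2.const_add 1
  have h4 : (0:ℝ) < 1 + Real.sqrt (1 + t ^ 2) := by positivity
  simpa using h3.sqrt h4.ne'

lemma stmt14_d2 (x : ℝ) :
    HasDerivAt (fun t : ℝ => (2 * t / (2 * Real.sqrt (1 + t ^ 2))) / (2 * Real.sqrt (1 + Real.sqrt (1 + t ^ 2))))
      (((2 * (2 * Real.sqrt (1 + x ^ 2)) - 2 * x * (2 * (2 * x / (2 * Real.sqrt (1 + x ^ 2))))) /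
            (2 * Real.sqrt (1 + x ^ 2)) ^ 2 * (2 * Real.sqrt (1 + Real.sqrt (1 + x ^ 2))) -
          2 * x / (2 * Real.sqrt (1 + x ^ 2)) *
            (2 * (2 * x / (2 * Real.sqrt (1 + x ^ 2)) / (2 * Real.sqrt (1 + Real.sqrt (1 + x ^ 2)))))) /
        (2 * Real.sqrt (1 + Real.sqrt (1 + x ^ 2))) ^ 2) x := by
  have h0 : (0:ℝ) < 1 + x ^ 2 := by positivity
  have h1 : HasDerivAt (fun u : ℝ => 1 + u ^ 2) (2 * x) x := by
    simpa using (hasDerivAt_pow 2 x).const_add 1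
  have h2 := h1.sqrt h0.ne'
  have h4 : (0:ℝ) < 1 + Real.sqrt (1 + x ^ 2) := by positivity
  have hN : HasDerivAt (fun u : ℝ => 2 * u) (2 : ℝ) x := by
    simpa using (hasDerivAt_id x).const_mul 2
  have hD : HasDerivAt (fun u : ℝ => 2 * Real.sqrt (1 + u ^ 2))
      (2 * (2 * x / (2 * Real.sqrt (1 + x ^ 2)))) x := h2.const_mul 2
  have hA := hN.div hD (by positivity)
  have h3 : HasDerivAt (fun u : ℝ => 1 + Real.sqrt (1 + u ^ 2))
      (2 * x / (2 * Real.sqrt (1 + x ^ 2))) x := h2.const_add 1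
  have h5 := h3.sqrt h4.ne'
  have hB : HasDerivAt (fun u : ℝ => 2 * Real.sqrt (1 + Real.sqrt (1 + u ^ 2)))
      (2 * (2 * x / (2 * Real.sqrt (1 + x ^ 2)) / (2 * Real.sqrt (1 + Real.sqrt (1 + x ^ 2))))) x :=
    h5.const_mul 2
  exact hA.div hB (by positivity)

lemma stmt14_alg1 (x s q : ℝ) (hs0 : 0 < s) (hq0 : 0 < q)
    (hs2 : s ^ 2 = 1 + x ^ 2) (hq2 : q ^ 2 = 1 + s) :
    (((2 * (2 * s) - 2 * x * (2 * (2 * x / (2 * s)))) / (2 * s) ^ 2 * (2 * q) -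
          2 * x / (2 * s) * (2 * (2 * x / (2 * s) / (2 * q)))) / (2 * q) ^ 2)
      = (2 - s) * q / (4 * s ^ 3) := by
  field_simp
  linear_combination (8*q^2 + 4*s) * hs2 + (8 - 4*(2-s)*(q^2+1+s)) * hq2

lemma stmt14_alg2 (s q r d : ℝ) (hs0 : 0 < s) (hq0 : 0 < q) (hr0 : 0 < r) (hd0 : 0 < d)
    (hq2 : q ^ 2 = 1 + s) (hr2 : r ^ 2 = s) (hd2 : d ^ 2 = 2) :
    (4 * (q / (d * r)) ^ 3 - 3 * (q / (d * r))) / (2 * d * (s * r))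
      = (2 - s) * q / (4 * s ^ 3) := by
  field_simp
  linear_combination (-12*s^2*d^2 - 2*(2-s)*(d^2*r^2+2*s)*d^2) * hr2
    + (16*s^2) * hq2
    + (-12*s^3 - 2*(2-s)*(d^2*r^2+2*s)*s) * hd2

/-- The second derivative of √(1+√(1+x²)) equals
cos((3/2) arctan x)/(2√2 (x²+1)^{3/4}). -/
theorem stmt14 (x : ℝ) :
    deriv (deriv (fun t : ℝ => Real.sqrt (1 + Real.sqrt (1 + t ^ 2)))) x
      = Real.cos ((3 / 2) * Real.arctan x) /
          (2 * Real.sqrt 2 * (x ^ 2 + 1) ^ ((3 : ℝ) / 4)) := by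
  have hdf : deriv (fun t : ℝ => Real.sqrt (1 + Real.sqrt (1 + t ^ 2)))
      = fun t : ℝ => (2 * t / (2 * Real.sqrt (1 + t ^ 2))) / (2 * Real.sqrt (1 + Real.sqrt (1 + t ^ 2))) :=
    funext fun t => (stmt14_d1 t).deriv
  rw [hdf, (stmt14_d2 x).deriv]
  have h0 : (0:ℝ) < 1 + x ^ 2 := by positivity
  set s := Real.sqrt (1 + x ^ 2) with hs
  have hs0 : 0 < s := Real.sqrt_pos.mpr h0
  have hs2 : s ^ 2 = 1 + x ^ 2 := Real.sq_sqrt h0.le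
  set q := Real.sqrt (1 + s) with hq
  have hq0 : 0 < q := Real.sqrt_pos.mpr (by positivity)
  have hq2 : q ^ 2 = 1 + s := Real.sq_sqrt (by positivity)
  set r := Real.sqrt s with hr
  have hr0 : 0 < r := Real.sqrt_pos.mpr hs0
  have hr2 : r ^ 2 = s := Real.sq_sqrt hs0.le
  set d := Real.sqrt 2 with hd
  have hd0 : 0 < d := Real.sqrt_pos.mpr (by norm_num)
  have hd2 : d ^ 2 = 2 := Real.sq_sqrt (by norm_num)
  have hpow : (x ^ 2 + 1 : ℝ) ^ ((3 : ℝ)/4) = s * r := by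
    have h1 : (x ^ 2 + 1 : ℝ) = s ^ 2 := by rw [hs2]; ring
    rw [h1, ← Real.rpow_natCast s 2, ← Real.rpow_mul hs0.le]
    norm_num
    rw [show (3:ℝ)/2 = 1 + 1/2 by norm_num, Real.rpow_add hs0, Real.rpow_one,
      ← Real.sqrt_eq_rpow]
  have hcos : Real.cos ((3/2) * Real.arctan x) = 4 * (q/(d*r)) ^ 3 - 3 * (q/(d*r)) := by
    rw [show (3/2 : ℝ) * Real.arctan x = 3 * (Real.arctan x / 2) by ring, Real.cos_three_mul]
    have hb1 : -Real.pi ≤ Real.arctan x :=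
      le_of_lt (by linarith [Real.neg_pi_div_two_lt_arctan x, Real.pi_pos])
    have hb2 : Real.arctan x ≤ Real.pi :=
      le_of_lt (by linarith [Real.arctan_lt_pi_div_two x, Real.pi_pos])
    rw [Real.cos_half hb1 hb2, Real.cos_arctan, ← hs]
    have key : (1 + 1 / s) / 2 = (q / (d * r)) ^ 2 := by
      field_simp
      linear_combination ((s+1)*r^2) * hd2 + (2*(s+1)) * hr2 - (2*s) * hq2
    rw [key, Real.sqrt_sq (by positivity)]
  rw [hcos, hpow]
  rw [stmt14_alg1 x s q hs0 hq0 hs2 hq2,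
    ← stmt14_alg2 s q r d hs0 hq0 hr0 hd0 hq2 hr2 hd2]
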